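/- Every diagonal matrix in SL(n, ℂ) is the commutator BDB⁻¹D⁻¹ of two matrices B, D ∈ GL(n, ℂ). -/

import Mathlib

/-- Every diagonal matrix in `SL(n, ℂ)` is the commutator `BDB⁻¹D⁻¹` of two invertible
matrices `B, D ∈ GL(n, ℂ)`. -/
theorem stmt_4 (n : ℕ) (A : Matrix (Fin n) (Fin n) ℂ) (hA : A.IsDiag) (hdet : A.det = 1) :
    ∃ B D : Matrix (Fin n) (Fin n) ℂ, IsUnit B ∧ IsUnit D ∧ A = B * D * B⁻¹ * D⁻¹ := by
  rcases n with _ | m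
  · exact ⟨1, 1, isUnit_one, isUnit_one, Subsingleton.elim _ _⟩
  set a : Fin (m+1) → ℂ := fun i => A i i with ha
  have hAdiag : A = Matrix.diagonal a := by
    ext i j
    by_cases h : i = j
    · subst h; simp [Matrix.diagonal, ha]
    · simp [Matrix.diagonal, h, hA h]
  have hprod : ∏ i, a i = 1 := by
    rw [hAdiag, Matrix.det_diagonal] at hdet; exact hdet
  have hane : ∀ i, a i ≠ 0 := by
    intro i hi
    have h0 : ∏ j, a j = 0 := Finset.prod_eq_zero (Finset.mem_univ i) hi
    rw [hprod] at h0; exact one_ne_zero h0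
  set d : Fin (m+1) → ℂ := fun i => ∏ j ∈ Finset.Iio i, a j with hd
  have hdne : ∀ i, d i ≠ 0 := fun i =>
    Finset.prod_ne_zero_iff.mpr fun j _ => hane j
  set σ : Equiv.Perm (Fin (m+1)) := finRotate (m+1) with hσ
  have key : ∀ i, d (σ i) = d i * a i := by
    intro i
    refine Fin.lastCases ?_ ?_ i
    · rw [hσ]
      simp only [finRotate_last]
      have h0 : Finset.Iio (0 : Fin (m+1)) = ∅ := by
        ext k; simp [Fin.lt_def, Fin.pos_iff_ne_zero]
      have huniv : Finset.Iic (Fin.last m) = Finset.univ := by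
        ext k; simp [Fin.le_last]
      have hlast : d (Fin.last m) * a (Fin.last m) = ∏ j ∈ Finset.Iic (Fin.last m), a j := by
        rw [← Finset.Iio_insert, Finset.prod_insert (fun h => lt_irrefl _ (Finset.mem_Iio.mp h)),
          mul_comm]
      rw [hd]; simp only [h0, Finset.prod_empty]
      rw [hlast, huniv, hprod]
    · intro j
      have hrot : σ j.castSucc = j.succ := by
        rw [hσ, finRotate_succ_apply]
        ext
        rw [Fin.val_add_one]
        simp [Fin.ext_iff, Fin.val_succ]
        intro h
        omega
      rw [hrot, hd]
      have hio : Finset.Iio j.succ = Finset.Iic j.castSucc := by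
        ext k; simp [Fin.lt_def, Fin.le_def, Nat.lt_succ_iff]
      simp only [hio, ← Finset.Iio_insert]
      rw [Finset.prod_insert (fun h => lt_irrefl _ (Finset.mem_Iio.mp h)), mul_comm]
  set B : Matrix (Fin (m+1)) (Fin (m+1)) ℂ := σ.toPEquiv.toMatrix with hB
  set Binv : Matrix (Fin (m+1)) (Fin (m+1)) ℂ := (σ⁻¹).toPEquiv.toMatrix with hBinv
  set D : Matrix (Fin (m+1)) (Fin (m+1)) ℂ := Matrix.diagonal d with hD
  set Dinv : Matrix (Fin (m+1)) (Fin (m+1)) ℂ := Matrix.diagonal (fun i => (d i)⁻¹) with hDinv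
  have hBBinv : B * Binv = 1 := by
    rw [hB, hBinv, ← PEquiv.toMatrix_trans, ← Equiv.toPEquiv_trans]
    simp [Equiv.Perm.inv_def]
  have hDDinv : D * Dinv = 1 := by
    rw [hD, hDinv, Matrix.diagonal_mul_diagonal,
      show (fun i => d i * (d i)⁻¹) = fun _ => (1 : ℂ) from
        funext fun i => mul_inv_cancel₀ (hdne i), Matrix.diagonal_one]
  refine ⟨B, D, IsUnit.of_mul_eq_one _ hBBinv, IsUnit.of_mul_eq_one _ hDDinv, ?_⟩
  rw [Matrix.inv_eq_right_inv hBBinv, Matrix.inv_eq_right_inv hDDinv]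
  rw [hB, hD, PEquiv.toMatrix_toPEquiv_mul, hBinv, PEquiv.mul_toMatrix_toPEquiv,
    Matrix.submatrix_submatrix]
  have hsymm : ⇑(σ⁻¹).symm = ⇑σ := rfl
  rw [hsymm]
  have hsub : (Matrix.diagonal d).submatrix (⇑σ ∘ id) (id ∘ ⇑σ) = Matrix.diagonal (d ∘ ⇑σ) := by
    simpa using Matrix.submatrix_diagonal_equiv d σ
  rw [hsub, hDinv, Matrix.diagonal_mul_diagonal, hAdiag]
  have hfun : (fun i => (d ∘ ⇑σ) i * (d i)⁻¹) = a := by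
    funext i
    simp only [Function.comp_apply, key i]
    rw [mul_comm, ← mul_assoc, inv_mul_cancel₀ (hdne i), one_mul]
  rw [hfun]
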